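/- Let V : ℝ → GL(n, ℂ) be continuously differentiable, Φ(t) = diag(exp(i·α₁(t)), …, exp(i·αₙ(t))) with each αⱼ : ℝ → ℝ continuously differentiable, Π a permutation matrix, and suppose V(t+1) = V(t)·Π·Φ(t) for all t. If the diagonal entries of P(t) := V(t)⁻¹ V'(t) are all real for all t, then each αⱼ is constant. -/

import Mathlib

open Matrix

theorem stmt_6 {n : ℕ} (V V' : ℝ → Matrix (Fin n) (Fin n) ℂ)
    (α α' : Fin n → ℝ → ℝ) (σ : Equiv.Perm (Fin n))
    (hinv : ∀ t, IsUnit (V t).det)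
    (hVderiv : ∀ i j t, HasDerivAt (fun s => V s i j) (V' t i j) t)
    (hVcont : ∀ i j, Continuous fun t => V' t i j)
    (hαderiv : ∀ j t, HasDerivAt (α j) (α' j t) t)
    (hαcont : ∀ j, Continuous (α' j))
    (hmon : ∀ t, V (t + 1) = V t *
      (Matrix.of fun i j : Fin n => if i = σ j then (1 : ℂ) else 0) *
      Matrix.diagonal (fun j => Complex.exp (Complex.I * (α j t))))
    (hreal : ∀ t j, (((V t)⁻¹ * V' t) j j).im = 0) :
    ∀ j s t, α j s = α j t := by
  classical
  set Pm : Matrix (Fin n) (Fin n) ℂ :=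
    Matrix.of fun i j : Fin n => if i = σ j then (1 : ℂ) else 0 with hPmdef
  -- entrywise monodromy
  have hentry : ∀ (s : ℝ) (i k : Fin n),
      V (s + 1) i k = V s i (σ k) * Complex.exp (Complex.I * (α k s)) := by
    intro s i k
    rw [hmon s]
    rw [Matrix.mul_diagonal, Matrix.mul_apply]
    simp [hPmdef, mul_ite, Finset.sum_ite_eq']
  -- derivative of the shifted entries
  have hderiv1 : ∀ (t : ℝ) (i k : Fin n),
      V' (t + 1) i k = V' t i (σ k) * Complex.exp (Complex.I * (α k t)) +
        V t i (σ k) * (Complex.exp (Complex.I * (α k t)) * (Complex.I * (α' k t))) := by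
    intro t i k
    have h1 : HasDerivAt (fun s => V (s + 1) i k) (V' (t + 1) i k) t :=
      HasDerivAt.comp_add_const t 1 (hVderiv i k (t + 1))
    have hexp : HasDerivAt (fun s => Complex.exp (Complex.I * (α k s)))
        (Complex.exp (Complex.I * (α k t)) * (Complex.I * (α' k t))) t := by
      have hc : HasDerivAt (fun s => (Complex.I * (α k s) : ℂ)) (Complex.I * (α' k t)) t :=
        ((hαderiv k t).ofReal_comp).const_mul Complex.I
      exact hc.cexp
    have h2 : HasDerivAt (fun s => V s i (σ k) * Complex.exp (Complex.I * (α k s)))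
        (V' t i (σ k) * Complex.exp (Complex.I * (α k t)) +
          V t i (σ k) * (Complex.exp (Complex.I * (α k t)) * (Complex.I * (α' k t)))) t :=
      (hVderiv i (σ k) t).mul hexp
    have h1' : HasDerivAt (fun s => V s i (σ k) * Complex.exp (Complex.I * (α k s)))
        (V' (t + 1) i k) t := by
      have hfun : (fun s => V (s + 1) i k) =
          fun s => V s i (σ k) * Complex.exp (Complex.I * (α k s)) :=
        funext fun s => hentry s i k
      rwa [hfun] at h1
    exact h1'.unique h2
  -- permutation matrix times its transpose
  have hPmT : Pm * Pmᵀ = 1 := by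
    ext i l
    rw [Matrix.mul_apply]
    rw [Finset.sum_eq_single (σ⁻¹ i)]
    · simp only [hPmdef, Matrix.transpose_apply, Matrix.of_apply, Equiv.Perm.coe_inv, Equiv.apply_symm_apply,
        if_true, one_mul, Matrix.one_apply]
      by_cases h : i = l
      · simp [h]
      · have h' : ¬ l = i := fun e => h e.symm
        simp [h, h']
    · intro b _ hb
      have : ¬ i = σ b := by
        intro h; exact hb (by simp [h])
      simp [hPmdef, this]
    · simp
  -- inverse of V (t+1)
  have hinvform : ∀ t : ℝ, (V (t + 1))⁻¹ =
      Matrix.diagonal (fun j => Complex.exp (-(Complex.I * (α j t)))) * Pmᵀ * (V t)⁻¹ := by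
    intro t
    apply Matrix.inv_eq_right_inv
    rw [hmon t]
    have hΦ : (Matrix.diagonal (fun j => Complex.exp (Complex.I * (α j t))) *
        Matrix.diagonal (fun j => Complex.exp (-(Complex.I * (α j t))))) = 1 := by
      rw [Matrix.diagonal_mul_diagonal]
      have : (fun j : Fin n => Complex.exp (Complex.I * (α j t)) *
          Complex.exp (-(Complex.I * (α j t)))) = fun _ => (1 : ℂ) := by
        funext j; rw [← Complex.exp_add]; simp
      rw [this, Matrix.diagonal_one]
    calc V t * Pm * Matrix.diagonal (fun j => Complex.exp (Complex.I * (α j t))) *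
          (Matrix.diagonal (fun j => Complex.exp (-(Complex.I * (α j t)))) * Pmᵀ * (V t)⁻¹)
        = V t * Pm * ((Matrix.diagonal (fun j => Complex.exp (Complex.I * (α j t))) *
          Matrix.diagonal (fun j => Complex.exp (-(Complex.I * (α j t))))) * (Pmᵀ * (V t)⁻¹)) := by
          simp only [Matrix.mul_assoc]
      _ = V t * (Pm * Pmᵀ) * (V t)⁻¹ := by
          rw [hΦ, Matrix.one_mul]; simp only [Matrix.mul_assoc]
      _ = 1 := by rw [hPmT, Matrix.mul_one, Matrix.mul_nonsing_inv _ (hinv t)]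
  -- key diagonal identity
  have hkey : ∀ (t : ℝ) (j : Fin n),
      ((V (t + 1))⁻¹ * V' (t + 1)) j j =
        ((V t)⁻¹ * V' t) (σ j) (σ j) + Complex.I * (α' j t) := by
    intro t j
    have hinvE : ∀ k, (V (t + 1))⁻¹ j k =
        Complex.exp (-(Complex.I * (α j t))) * (V t)⁻¹ (σ j) k := by
      intro k
      rw [hinvform t, Matrix.mul_apply]
      simp only [Matrix.diagonal_mul, Matrix.transpose_apply, hPmdef, Matrix.of_apply,
        mul_ite, mul_one, mul_zero, ite_mul, zero_mul]
      simp [Finset.sum_ite_eq']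
    rw [Matrix.mul_apply]
    have hterm : ∀ k, (V (t + 1))⁻¹ j k * V' (t + 1) k j =
        Complex.exp (-(Complex.I * (α j t))) * Complex.exp (Complex.I * (α j t)) *
          ((V t)⁻¹ (σ j) k * V' t k (σ j) +
           (V t)⁻¹ (σ j) k * V t k (σ j) * (Complex.I * (α' j t))) := by
      intro k
      rw [hinvE k, hderiv1 t k j]
      ring
    rw [Finset.sum_congr rfl fun k _ => hterm k]
    rw [← Finset.mul_sum, ← Complex.exp_add]
    simp only [neg_add_cancel, Complex.exp_zero, one_mul]
    rw [Finset.sum_add_distrib]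
    have hS2 : ∑ k, (V t)⁻¹ (σ j) k * V t k (σ j) * (Complex.I * (α' j t)) =
        Complex.I * (α' j t) := by
      rw [← Finset.sum_mul, ← Matrix.mul_apply, Matrix.nonsing_inv_mul _ (hinv t),
        Matrix.one_apply_eq, one_mul]
    rw [hS2, ← Matrix.mul_apply]
  -- α' vanishes
  have hzero : ∀ (j : Fin n) (t : ℝ), α' j t = 0 := by
    intro j t
    have h1 := hreal (t + 1) j
    rw [hkey t j] at h1
    have h2 := hreal t (σ j)
    simp only [Complex.add_im, h2, zero_add] at h1
    simpa using h1
  intro j s t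
  have hdiff : Differentiable ℝ (α j) := fun x => (hαderiv j x).differentiableAt
  apply is_const_of_deriv_eq_zero hdiff
  intro x
  have hx := hαderiv j x
  rw [hzero j x] at hx
  exact hx.deriv
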